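/- Let n and e be positive integers with 1 ≤ e ≤ n, and let c be any integer. Then the number of e-element subsets J of [1,n] such that c(J) = c and n ∈ J is C(e−1, c−1)·C(n−e, c−1). -/

import Mathlib

/-- Binomial coefficient `C(a,b)` for integers, with the convention that it is `0`
when `a < 0` or `b < 0` (and, as usual, when `b > a`), and `C(a,0) = 1` for `a ≥ 0`. -/
def intChoose (a b : ℤ) : ℕ :=
  if 0 ≤ a ∧ 0 ≤ b then a.toNat.choose b.toNat else 0

/-- The number of connected components of a finite set of integers:
`c(J) = |{j ∈ J : j+1 ∉ J}|`. -/
def numComponents (J : Finset ℕ) : ℕ := (J.filter (fun j => j + 1 ∉ J)).card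

open Finset

namespace CompAux

/-- subsets of `[1,n]` of card `e`, `c` components, containing `n`. -/
def AA (n e c : ℕ) : Finset (Finset ℕ) :=
  (Finset.Icc 1 n).powerset.filter (fun J => J.card = e ∧ numComponents J = c ∧ n ∈ J)

/-- subsets of `[1,n]` of card `e`, `c` components. -/
def BB (n e c : ℕ) : Finset (Finset ℕ) :=
  (Finset.Icc 1 n).powerset.filter (fun J => J.card = e ∧ numComponents J = c)

lemma nc_empty : numComponents ∅ = 0 := by simp [numComponents]

lemma nc_pos (J : Finset ℕ) (hJ : J.Nonempty) : numComponents J ≠ 0 := by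
  have hm : J.max' hJ ∈ J := J.max'_mem hJ
  have hm1 : J.max' hJ + 1 ∉ J := by
    intro h
    have := J.le_max' _ h
    omega
  have : J.max' hJ ∈ J.filter (fun j => j + 1 ∉ J) := by
    simp [Finset.mem_filter, hm, hm1]
  unfold numComponents
  intro h
  rw [Finset.card_eq_zero] at h
  simp [h] at this

lemma nc_insert_adj (J : Finset ℕ) (a : ℕ) (ha : a ∈ J) (hmax : ∀ j ∈ J, j ≤ a) :
    numComponents (insert (a + 1) J) = numComponents J := by
  have h1 : a + 1 ∉ J := fun h => by have := hmax _ h; omega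
  have h2 : a + 2 ∉ J := fun h => by have := hmax _ h; omega
  have hfil : (insert (a + 1) J).filter (fun j => j + 1 ∉ insert (a + 1) J)
      = insert (a + 1) ((J.filter (fun j => j + 1 ∉ J)).erase a) := by
    ext j
    simp only [Finset.mem_filter, Finset.mem_insert, Finset.mem_erase, not_or]
    constructor
    · rintro ⟨hj, hne, hnin⟩
      rcases hj with rfl | hj
      · exact Or.inl rfl
      · exact Or.inr ⟨by omega, hj, hnin⟩
    · rintro (rfl | ⟨hne, hj, hnin⟩)
      · exact ⟨Or.inl rfl, by omega, h2⟩
      · refine ⟨Or.inr hj, by omega, hnin⟩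
  have haf : a ∈ J.filter (fun j => j + 1 ∉ J) := by simp [Finset.mem_filter, ha, h1]
  have hnotin : a + 1 ∉ (J.filter (fun j => j + 1 ∉ J)).erase a := by
    intro h
    have := Finset.mem_of_mem_erase h
    simp [Finset.mem_filter] at this
    exact h1 this.1
  unfold numComponents
  rw [hfil, Finset.card_insert_of_notMem hnotin, Finset.card_erase_of_mem haf]
  have : 0 < (J.filter (fun j => j + 1 ∉ J)).card := Finset.card_pos.mpr ⟨a, haf⟩
  omega

lemma nc_insert_gap (J : Finset ℕ) (m : ℕ) (h : ∀ j ∈ J, j + 1 < m) :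
    numComponents (insert m J) = numComponents J + 1 := by
  have hm : m ∉ J := fun hmm => by have := h _ hmm; omega
  have hm1 : m + 1 ∉ J := fun hmm => by have := h _ hmm; omega
  have hfil : (insert m J).filter (fun j => j + 1 ∉ insert m J)
      = insert m (J.filter (fun j => j + 1 ∉ J)) := by
    ext j
    simp only [Finset.mem_filter, Finset.mem_insert, not_or]
    constructor
    · rintro ⟨hj, hne, hnin⟩
      rcases hj with rfl | hj
      · exact Or.inl rfl
      · exact Or.inr ⟨hj, hnin⟩
    · rintro (rfl | ⟨hj, hnin⟩)
      · exact ⟨Or.inl rfl, by omega, hm1⟩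
      · have := h _ hj
        exact ⟨Or.inr hj, by omega, hnin⟩
  have hnotin : m ∉ J.filter (fun j => j + 1 ∉ J) := by
    simp only [Finset.mem_filter]
    tauto
  unfold numComponents
  rw [hfil, Finset.card_insert_of_notMem hnotin]

lemma nc_erase_adj (J : Finset ℕ) (a : ℕ) (ha1 : a + 1 ∈ J) (ha : a ∈ J)
    (hmax : ∀ j ∈ J, j ≤ a + 1) :
    numComponents (J.erase (a + 1)) = numComponents J := by
  have h := nc_insert_adj (J.erase (a + 1)) a
    (Finset.mem_erase.mpr ⟨by omega, ha⟩)
    (fun j hj => by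
      have h1 := Finset.mem_of_mem_erase hj
      have h2 := (Finset.mem_erase.mp hj).1
      have := hmax _ h1; omega)
  rw [Finset.insert_erase ha1] at h
  exact h.symm

lemma nc_erase_gap (J : Finset ℕ) (m : ℕ) (hm : m ∈ J)
    (h : ∀ j ∈ J, j ≠ m → j + 1 < m) :
    numComponents J = numComponents (J.erase m) + 1 := by
  have hgap := nc_insert_gap (J.erase m) m
    (fun j hj => h _ (Finset.mem_of_mem_erase hj) (Finset.mem_erase.mp hj).1)
  rwa [Finset.insert_erase hm] at hgap

lemma E1 (n c : ℕ) : (AA n 0 c).card = 0 := by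
  rw [Finset.card_eq_zero]
  ext J
  simp only [AA, Finset.mem_filter, Finset.notMem_empty, iff_false]
  rintro ⟨-, hcard, -, hmem⟩
  rw [Finset.card_eq_zero] at hcard
  subst hcard
  simp at hmem

lemma E_A_c0 (n e : ℕ) : (AA n e 0).card = 0 := by
  rw [Finset.card_eq_zero]
  ext J
  simp only [AA, Finset.mem_filter, Finset.notMem_empty, iff_false]
  rintro ⟨-, -, hc, hn⟩
  exact nc_pos J ⟨n, hn⟩ hc

lemma E3 (n c : ℕ) : (BB n 0 c).card = if c = 0 then 1 else 0 := by
  have : BB n 0 c = if c = 0 then {(∅ : Finset ℕ)} else ∅ := by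
    ext J
    constructor
    · intro hJ
      simp only [BB, Finset.mem_filter] at hJ
      obtain ⟨_, hcard, hcomp⟩ := hJ
      rw [Finset.card_eq_zero] at hcard
      subst hcard
      rw [nc_empty] at hcomp
      simp [← hcomp]
    · intro hJ
      by_cases hc : c = 0
      · simp [hc] at hJ
        subst hJ
        simp [BB, nc_empty, hc]
      · simp [hc] at hJ
  rw [this]
  by_cases hc : c = 0 <;> simp [hc]

lemma E4 (n e : ℕ) : (BB n (e + 1) 0).card = 0 := by
  rw [Finset.card_eq_zero]
  ext J
  simp only [BB, Finset.mem_filter, Finset.notMem_empty, iff_false]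
  rintro ⟨-, hcard, hcomp⟩
  have : J.Nonempty := Finset.card_pos.mp (by omega)
  exact nc_pos J this hcomp

lemma E5 (n e c : ℕ) (h : n < e) : (BB n e c).card = 0 := by
  rw [Finset.card_eq_zero]
  ext J
  simp only [BB, Finset.mem_filter, Finset.mem_powerset, Finset.notMem_empty, iff_false]
  rintro ⟨hsub, hcard, -⟩
  have := Finset.card_le_card hsub
  rw [Nat.card_Icc] at this
  omega

lemma split_B (n e c : ℕ) :
    (BB (n + 1) e c).card = (BB n e c).card + (AA (n + 1) e c).card := by
  classical
  have h := Finset.card_filter_add_card_filter_not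
    (s := BB (n + 1) e c) (p := fun J => (n + 1) ∈ J)
  have h1 : (BB (n + 1) e c).filter (fun J => (n + 1) ∈ J) = AA (n + 1) e c := by
    ext J
    simp only [BB, AA, Finset.mem_filter]
    tauto
  have h2 : (BB (n + 1) e c).filter (fun J => ¬ (n + 1) ∈ J) = BB n e c := by
    ext J
    simp only [BB, Finset.mem_filter, Finset.mem_powerset]
    constructor
    · rintro ⟨⟨hsub, hcard, hcomp⟩, hn⟩
      refine ⟨fun x hx => ?_, hcard, hcomp⟩
      have hx1 := hsub hx
      rw [Finset.mem_Icc] at hx1 ⊢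
      have : x ≠ n + 1 := fun hxe => hn (hxe ▸ hx)
      omega
    · rintro ⟨hsub, hcard, hcomp⟩
      have hn : (n + 1) ∉ J := fun hmem => by
        have := hsub hmem
        rw [Finset.mem_Icc] at this
        omega
      refine ⟨⟨fun x hx => ?_, hcard, hcomp⟩, hn⟩
      have := hsub hx
      rw [Finset.mem_Icc] at this ⊢
      omega
  rw [h1, h2] at h
  omega

lemma split_A (n e c : ℕ) :
    (AA (n + 2) (e + 1) (c + 1)).card
      = (AA (n + 1) e (c + 1)).card + (BB n e c).card := by
  classical
  have h := Finset.card_filter_add_card_filter_not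
    (s := AA (n + 2) (e + 1) (c + 1)) (p := fun J => (n + 1) ∈ J)
  have h1 : ((AA (n + 2) (e + 1) (c + 1)).filter (fun J => (n + 1) ∈ J)).card
      = (AA (n + 1) e (c + 1)).card := by
    apply Finset.card_nbij' (i := fun J => J.erase (n + 2)) (j := fun J => insert (n + 2) J)
    · intro J hJ
      simp only [AA, Finset.mem_coe, Finset.mem_filter, Finset.mem_powerset] at hJ
      obtain ⟨⟨hsub, hcard, hcomp, htop⟩, hn1⟩ := hJ
      simp only [AA, Finset.mem_coe, Finset.mem_filter, Finset.mem_powerset]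
      refine ⟨fun x hx => ?_, ?_, ?_, ?_⟩
      · have hx1 := hsub (Finset.mem_of_mem_erase hx)
        have hx2 := (Finset.mem_erase.mp hx).1
        rw [Finset.mem_Icc] at hx1 ⊢
        omega
      · rw [Finset.card_erase_of_mem htop, hcard]; omega
      · rw [nc_erase_adj J (n + 1) htop hn1
          (fun j hj => by have := hsub hj; rw [Finset.mem_Icc] at this; omega)]
        exact hcomp
      · exact Finset.mem_erase.mpr ⟨by omega, hn1⟩
    · intro J hJ
      simp only [AA, Finset.mem_coe, Finset.mem_filter, Finset.mem_powerset] at hJ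
      obtain ⟨hsub, hcard, hcomp, htop⟩ := hJ
      have hnot : (n + 2) ∉ J := fun hmem => by
        have := hsub hmem; rw [Finset.mem_Icc] at this; omega
      refine Finset.mem_filter.mpr ⟨Finset.mem_filter.mpr
        ⟨Finset.mem_powerset.mpr fun x hx => ?_, ?_, ?_, ?_⟩, ?_⟩
      · rw [Finset.mem_insert] at hx
        rcases hx with rfl | hx
        · simp [Finset.mem_Icc]
        · have := hsub hx; rw [Finset.mem_Icc] at this ⊢; omega
      · rw [Finset.card_insert_of_notMem hnot, hcard]
      · rw [nc_insert_adj J (n + 1) htop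
          (fun j hj => by have := hsub hj; rw [Finset.mem_Icc] at this; omega)]
        exact hcomp
      · exact Finset.mem_insert_self _ _
      · exact Finset.mem_insert_of_mem htop
    · intro J hJ
      simp only [AA, Finset.mem_coe, Finset.mem_filter, Finset.mem_powerset] at hJ
      obtain ⟨⟨-, -, -, htop⟩, -⟩ := hJ
      exact Finset.insert_erase htop
    · intro J hJ
      simp only [AA, Finset.mem_coe, Finset.mem_filter, Finset.mem_powerset] at hJ
      have hnot : (n + 2) ∉ J := fun hmem => by
        have := hJ.1 hmem; rw [Finset.mem_Icc] at this; omega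
      exact Finset.erase_insert hnot
  have h2 : ((AA (n + 2) (e + 1) (c + 1)).filter (fun J => ¬ (n + 1) ∈ J)).card
      = (BB n e c).card := by
    apply Finset.card_nbij' (i := fun J => J.erase (n + 2)) (j := fun J => insert (n + 2) J)
    · intro J hJ
      simp only [AA, Finset.mem_coe, Finset.mem_filter, Finset.mem_powerset] at hJ
      obtain ⟨⟨hsub, hcard, hcomp, htop⟩, hn1⟩ := hJ
      simp only [BB, Finset.mem_coe, Finset.mem_filter, Finset.mem_powerset]
      have hside : ∀ j ∈ J, j ≠ n + 2 → j + 1 < n + 2 := by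
        intro j hj hne
        have := hsub hj; rw [Finset.mem_Icc] at this
        have : j ≠ n + 1 := fun hje => hn1 (hje ▸ hj)
        omega
      refine ⟨fun x hx => ?_, ?_, ?_⟩
      · have hx1 := hsub (Finset.mem_of_mem_erase hx)
        have hx2 := (Finset.mem_erase.mp hx).1
        have hx3 : x ≠ n + 1 := fun hxe => hn1 (hxe ▸ Finset.mem_of_mem_erase hx)
        rw [Finset.mem_Icc] at hx1 ⊢
        omega
      · rw [Finset.card_erase_of_mem htop, hcard]; omega
      · have := nc_erase_gap J (n + 2) htop hside
        omega
    · intro J hJ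
      simp only [BB, Finset.mem_coe, Finset.mem_filter, Finset.mem_powerset] at hJ
      obtain ⟨hsub, hcard, hcomp⟩ := hJ
      have hsmall : ∀ j ∈ J, j + 1 < n + 2 := by
        intro j hj
        have := hsub hj; rw [Finset.mem_Icc] at this; omega
      have hnot : (n + 2) ∉ J := fun hmem => by have := hsmall _ hmem; omega
      refine Finset.mem_filter.mpr ⟨Finset.mem_filter.mpr
        ⟨Finset.mem_powerset.mpr fun x hx => ?_, ?_, ?_, ?_⟩, ?_⟩
      · rw [Finset.mem_insert] at hx
        rcases hx with rfl | hx
        · simp [Finset.mem_Icc]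
        · have := hsub hx; rw [Finset.mem_Icc] at this ⊢; omega
      · rw [Finset.card_insert_of_notMem hnot, hcard]
      · rw [nc_insert_gap J (n + 2) hsmall, hcomp]
      · exact Finset.mem_insert_self _ _
      · intro hmem
        rw [Finset.mem_insert] at hmem
        rcases hmem with hmem | hmem
        · omega
        · have := hsmall _ hmem; omega
    · intro J hJ
      simp only [AA, Finset.mem_coe, Finset.mem_filter, Finset.mem_powerset] at hJ
      obtain ⟨⟨-, -, -, htop⟩, -⟩ := hJ
      exact Finset.insert_erase htop
    · intro J hJ
      simp only [BB, Finset.mem_coe, Finset.mem_filter, Finset.mem_powerset] at hJ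
      have hnot : (n + 2) ∉ J := fun hmem => by
        have := hJ.1 hmem; rw [Finset.mem_Icc] at this; omega
      exact Finset.erase_insert hnot
  rw [h1, h2] at h
  omega

lemma base_A (c : ℕ) : (AA 1 1 (c + 1)).card = if c = 0 then 1 else 0 := by
  have hmem : ∀ J, J ∈ AA 1 1 (c + 1) → J = {1} ∧ c = 0 := by
    intro J hJ
    simp only [AA, Finset.mem_filter, Finset.mem_powerset, Finset.Icc_self] at hJ
    obtain ⟨hsub, hcard, hcomp, hmem1⟩ := hJ
    have hJ1 : J = {1} := by
      rcases Finset.subset_singleton_iff.mp hsub with rfl | rfl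
      · simp at hmem1
      · rfl
    subst hJ1
    have : numComponents {1} = 1 := by decide
    refine ⟨rfl, by omega⟩
  by_cases hc : c = 0
  · subst hc
    simp only [if_pos rfl]
    have : AA 1 1 1 = {({1} : Finset ℕ)} := by
      apply Finset.Subset.antisymm
      · intro J hJ
        have := hmem J hJ
        simp [this.1]
      · intro J hJ
        simp only [Finset.mem_singleton] at hJ
        subst hJ
        simp only [AA, Finset.mem_filter, Finset.mem_powerset, Finset.Icc_self]
        refine ⟨le_refl _, by simp, by decide, by simp⟩
    rw [this]; rfl
  · simp only [if_neg hc]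
    rw [Finset.card_eq_zero]
    ext J
    simp only [Finset.notMem_empty, iff_false]
    intro hJ
    exact hc (hmem J hJ).2

lemma main (n : ℕ) :
    (∀ e c, e ≤ n → (AA (n + 1) (e + 1) (c + 1)).card = e.choose c * (n - e).choose c)
  ∧ (∀ e c, e ≤ n → (BB n (e + 1) (c + 1)).card = e.choose c * (n - e).choose (c + 1)) := by
  induction n with
  | zero =>
    constructor
    · intro e c he
      interval_cases e
      rw [base_A c]
      rcases c with _ | c
      · simp
      · simp [Nat.choose_eq_zero_of_lt (Nat.succ_pos c)]
    · intro e c he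
      interval_cases e
      rw [E5 0 1 (c + 1) (by omega)]
      simp [Nat.choose_eq_zero_of_lt (Nat.succ_pos c)]
  | succ m ih =>
    obtain ⟨ihA, ihB⟩ := ih
    have hA : ∀ e c, e ≤ m + 1 →
        (AA (m + 2) (e + 1) (c + 1)).card = e.choose c * (m + 1 - e).choose c := by
      intro e c he
      rw [split_A m e c]
      rcases e with _ | e'
      · rw [E1]
        rcases c with _ | c'
        · rw [E3]; simp
        · rw [E3]; simp
      · have he' : e' ≤ m := by omega
        rw [ihA e' c he']
        rcases c with _ | c'
        · rw [E4]
          simp only [Nat.choose_zero_right]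
        · have hB : (BB m (e' + 1) (c' + 1)).card = e'.choose c' * (m - e').choose (c' + 1) :=
            ihB e' c' he'
          rw [hB]
          have h1 : m + 1 - (e' + 1) = m - e' := by omega
          rw [h1, Nat.choose_succ_succ' e' c']
          ring
    refine ⟨hA, ?_⟩
    intro e c he
    rcases Nat.lt_or_ge e (m + 1) with hlt | hge
    · have he' : e ≤ m := by omega
      rw [split_B m (e + 1) (c + 1), ihB e c he', ihA e c he']
      have h1 : m + 1 - e = (m - e) + 1 := by omega
      rw [h1, Nat.choose_succ_succ' (m - e) c]
      ring
    · have : e = m + 1 := by omega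
      subst this
      rw [E5 (m + 1) (m + 2) (c + 1) (by omega)]
      simp

end CompAux

/-- The number of `e`-element subsets `J` of `[1,n]` with `c(J) = c` containing `n` is
`C(e−1, c−1) · C(n−e, c−1)`. -/
theorem num_subsets_with_components_containing_top (n e : ℕ) (he : 1 ≤ e) (hn : e ≤ n)
    (c : ℤ) :
    ((Finset.Icc 1 n).powerset.filter
        (fun J => J.card = e ∧ (numComponents J : ℤ) = c ∧ n ∈ J)).card
      = intChoose ((e : ℤ) - 1) (c - 1) * intChoose ((n : ℤ) - e) (c - 1) := by
  classical
  rcases le_or_gt c 0 with hc | hc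
  · -- trivially zero on both sides
    have hrhs : intChoose ((e : ℤ) - 1) (c - 1) = 0 := by
      unfold intChoose
      rw [if_neg]
      rintro ⟨_, h2⟩
      omega
    rw [hrhs, Nat.zero_mul]
    rw [Finset.card_eq_zero]
    ext J
    simp only [Finset.mem_filter, Finset.notMem_empty, iff_false]
    rintro ⟨-, -, hcomp, hmem⟩
    have h1 : numComponents J ≠ 0 := CompAux.nc_pos J ⟨n, hmem⟩
    omega
  · -- c ≥ 1
    lift c to ℕ using (by omega : (0 : ℤ) ≤ c) with c₀
    have hc1 : 1 ≤ c₀ := by exact_mod_cast hc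
    obtain ⟨k, rfl⟩ : ∃ k, c₀ = k + 1 := ⟨c₀ - 1, by omega⟩
    obtain ⟨e', rfl⟩ : ∃ e', e = e' + 1 := ⟨e - 1, by omega⟩
    obtain ⟨m, rfl⟩ : ∃ m, n = m + 1 := ⟨n - 1, by omega⟩
    have he' : e' ≤ m := by omega
    have hset : (Finset.Icc 1 (m + 1)).powerset.filter
        (fun J => J.card = e' + 1 ∧ (numComponents J : ℤ) = ((k + 1 : ℕ) : ℤ) ∧ (m + 1) ∈ J)
        = CompAux.AA (m + 1) (e' + 1) (k + 1) := by
      unfold CompAux.AA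
      apply Finset.filter_congr
      intro J _
      constructor
      · rintro ⟨h1, h2, h3⟩
        exact ⟨h1, by exact_mod_cast h2, h3⟩
      · rintro ⟨h1, h2, h3⟩
        exact ⟨h1, by exact_mod_cast h2, h3⟩
    rw [hset, (CompAux.main m).1 e' k he']
    have h1 : ((↑(e' + 1) : ℤ) - 1) = (e' : ℤ) := by push_cast; ring
    have h2 : ((↑(k + 1) : ℕ) : ℤ) - 1 = (k : ℤ) := by push_cast; ring
    have h3 : ((↑(m + 1) : ℤ) - (↑(e' + 1) : ℤ)) = ((m - e' : ℕ) : ℤ) := by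
      push_cast [Nat.cast_sub he']; ring
    rw [h1, h2, h3]
    unfold intChoose
    rw [if_pos ⟨Int.natCast_nonneg _, Int.natCast_nonneg _⟩,
        if_pos ⟨Int.natCast_nonneg _, Int.natCast_nonneg _⟩]
    simp
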